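/- The Gaussian Q-function Q(x) = ∫ₓ^∞ (1/√(2π)) e^{−t²/2} dt is strictly decreasing on ℝ, and consequently, for fixed N > 0 and R ≥ 0, the decoding error probability ε(γ) = Q(f(γ)) with f(γ) = ln 2·√(N/(1−(1+γ)⁻²))·(log₂(1+γ) − R) is strictly decreasing in γ on (0, ∞). -/

import Mathlib

open MeasureTheory Real Set in
lemma gauss_integrable' : Integrable (fun t : ℝ => (Real.sqrt (2 * Real.pi))⁻¹ * Real.exp (-t ^ 2 / 2)) := by
  have h := (integrable_exp_neg_mul_sq (by norm_num : (0:ℝ) < 1/2)).const_mul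
    ((Real.sqrt (2 * Real.pi))⁻¹)
  convert h using 2 with t
  ring_nf

noncomputable def gaussQ (x : ℝ) : ℝ :=
  ∫ t in Set.Ioi x, (Real.sqrt (2 * Real.pi))⁻¹ * Real.exp (-t ^ 2 / 2)

open MeasureTheory Real Set in
lemma gaussQ_strictAnti' : StrictAnti gaussQ := by
  intro a b hab
  have hsplit : gaussQ a = (∫ t in Set.Ioc a b, (Real.sqrt (2 * Real.pi))⁻¹ * Real.exp (-t ^ 2 / 2))
      + gaussQ b := by
    rw [gaussQ, gaussQ, ← setIntegral_union (Set.Ioc_disjoint_Ioi le_rfl)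
      measurableSet_Ioi gauss_integrable'.integrableOn gauss_integrable'.integrableOn,
      Set.Ioc_union_Ioi_eq_Ioi hab.le]
  have hpos : 0 < ∫ t in Set.Ioc a b, (Real.sqrt (2 * Real.pi))⁻¹ * Real.exp (-t ^ 2 / 2) := by
    rw [← intervalIntegral.integral_of_le hab.le]
    apply intervalIntegral.intervalIntegral_pos_of_pos_on gauss_integrable'.intervalIntegrable
    · intro x _
      have := Real.pi_pos
      positivity
    · exact hab
  linarith [hsplit]

open Real in
lemma f_hasDeriv' (N R : ℝ) {γ : ℝ} (hγ : 0 < γ) (hN : 0 < N) :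
    HasDerivAt (fun γ : ℝ => Real.log 2 * Real.sqrt (N / (1 - ((1 + γ) ^ 2)⁻¹)) *
        (Real.log (1 + γ) / Real.log 2 - R))
      (Real.log 2 * ((-(N * (2 / (1 + γ) ^ 3)) / (1 - ((1 + γ) ^ 2)⁻¹) ^ 2) /
          (2 * Real.sqrt (N / (1 - ((1 + γ) ^ 2)⁻¹)))) *
        (Real.log (1 + γ) / Real.log 2 - R) +
       Real.log 2 * Real.sqrt (N / (1 - ((1 + γ) ^ 2)⁻¹)) * (1 / (1 + γ) / Real.log 2)) γ := by
  have ha0 : (0:ℝ) < 1 + γ := by linarith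
  have ha1 : (1:ℝ) < 1 + γ := by linarith
  have hu : 0 < 1 - ((1 + γ) ^ 2)⁻¹ := by
    have h1 : (1:ℝ) < (1 + γ) ^ 2 := by nlinarith
    have : ((1 + γ) ^ 2)⁻¹ < 1 := by
      rw [inv_lt_one_iff₀]; right; exact h1
    linarith
  have h1 : HasDerivAt (fun γ : ℝ => 1 + γ) 1 γ := by
    simpa using (hasDerivAt_id γ).const_add (1:ℝ)
  have h2 : HasDerivAt (fun γ : ℝ => (1 + γ) ^ 2) (2 * (1 + γ)) γ := by
    have : HasDerivAt (fun γ : ℝ => (1 + γ) ^ 2) _ γ := h1.pow 2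
    convert this using 1; push_cast; ring
  have h4 : HasDerivAt (fun γ : ℝ => 1 - ((1 + γ) ^ 2)⁻¹) (2 / (1 + γ) ^ 3) γ := by
    have hne : (1 + γ) ^ 2 ≠ 0 := by positivity
    have : HasDerivAt (fun γ : ℝ => 1 - ((1 + γ) ^ 2)⁻¹) _ γ := (h2.inv hne).const_sub (1:ℝ)
    convert this using 1
    field_simp
  have h5 : HasDerivAt (fun γ : ℝ => N / (1 - ((1 + γ) ^ 2)⁻¹))
      (-(N * (2 / (1 + γ) ^ 3)) / (1 - ((1 + γ) ^ 2)⁻¹) ^ 2) γ := by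
    have : HasDerivAt (fun γ : ℝ => N / (1 - ((1 + γ) ^ 2)⁻¹)) _ γ := (hasDerivAt_const γ N).div h4 hu.ne'
    convert this using 1
    ring
  have h6 := h5.sqrt (by positivity : N / (1 - ((1 + γ) ^ 2)⁻¹) ≠ 0)
  have h7 : HasDerivAt (fun γ : ℝ => Real.log (1 + γ)) (1 / (1 + γ)) γ := by
    have := h1.log ha0.ne'
    simpa using this
  have h8 := (h7.div_const (Real.log 2)).sub_const R
  exact ((h6.const_mul (Real.log 2)).mul h8)

open Real in
lemma deriv_pos' (N R : ℝ) (hN : 0 < N) (hR : 0 ≤ R) {γ : ℝ} (hγ : 0 < γ) :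
    0 < Real.log 2 * ((-(N * (2 / (1 + γ) ^ 3)) / (1 - ((1 + γ) ^ 2)⁻¹) ^ 2) /
          (2 * Real.sqrt (N / (1 - ((1 + γ) ^ 2)⁻¹)))) *
        (Real.log (1 + γ) / Real.log 2 - R) +
       Real.log 2 * Real.sqrt (N / (1 - ((1 + γ) ^ 2)⁻¹)) * (1 / (1 + γ) / Real.log 2) := by
  have ha0 : (0:ℝ) < 1 + γ := by linarith
  have ha1 : (1:ℝ) < 1 + γ := by linarith
  set a := 1 + γ with ha
  have hu : 0 < 1 - (a ^ 2)⁻¹ := by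
    have h1 : (1:ℝ) < a ^ 2 := by nlinarith
    have : (a ^ 2)⁻¹ < 1 := by rw [inv_lt_one_iff₀]; right; exact h1
    linarith
  set u := 1 - (a ^ 2)⁻¹ with hudef
  have hl2 : 0 < Real.log 2 := Real.log_pos one_lt_two
  have hs : 0 < Real.sqrt (N / u) := Real.sqrt_pos.2 (by positivity)
  set s := Real.sqrt (N / u) with hsdef
  have hs2 : s * s = N / u := Real.mul_self_sqrt (by positivity)
  set L := Real.log a / Real.log 2 with hL
  have hua : u * a ^ 2 = a ^ 2 - 1 := by
    rw [hudef]; field_simp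
  have hkey : L - R < u * a ^ 2 / Real.log 2 := by
    rw [hua]
    have hlog : Real.log a ≤ a - 1 := Real.log_le_sub_one_of_pos ha0
    have h2 : L - R ≤ L := by simpa using sub_le_self L hR
    have h3 : L ≤ (a - 1) / Real.log 2 := by
      rw [hL]; gcongr
    have h4 : (a - 1) / Real.log 2 < (a ^ 2 - 1) / Real.log 2 := by
      gcongr
      nlinarith
    linarith
  set E := Real.log 2 * ((-(N * (2 / a ^ 3)) / u ^ 2) / (2 * s)) * (L - R) +
      Real.log 2 * s * (1 / a / Real.log 2) with hE
  have hsE : s * E = Real.log 2 * (N / (a ^ 3 * u ^ 2)) * (u * a ^ 2 / Real.log 2 - (L - R)) := by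
    have hNsu : N = s * s * u := by
      rw [hs2]; field_simp
    rw [hE, hNsu]
    field_simp
    ring
  have hpos : 0 < s * E := by
    rw [hsE]
    have : 0 < u * a ^ 2 / Real.log 2 - (L - R) := by linarith
    positivity
  have := mul_pos (inv_pos.2 hs) hpos
  rwa [inv_mul_cancel_left₀ hs.ne'] at this

theorem Q_strictAnti_and_eps_strictAntiOn (N R : ℝ) (hN : 0 < N) (hR : 0 ≤ R) :
    StrictAnti gaussQ ∧
    StrictAntiOn
      (fun γ : ℝ => gaussQ (Real.log 2 * Real.sqrt (N / (1 - ((1 + γ) ^ 2)⁻¹)) *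
        (Real.log (1 + γ) / Real.log 2 - R)))
      (Set.Ioi (0 : ℝ)) := by
  refine ⟨gaussQ_strictAnti', ?_⟩
  have hmono : StrictMonoOn
      (fun γ : ℝ => Real.log 2 * Real.sqrt (N / (1 - ((1 + γ) ^ 2)⁻¹)) *
        (Real.log (1 + γ) / Real.log 2 - R)) (Set.Ioi (0 : ℝ)) := by
    apply StrictMonoOn.mono (s := Set.Ioi (0:ℝ)) ?_ le_rfl
    apply strictMonoOn_of_deriv_pos (convex_Ioi 0)
    · exact fun x hx => (f_hasDeriv' N R hx hN).continuousAt.continuousWithinAt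
    · intro x hx
      rw [interior_Ioi] at hx
      rw [(f_hasDeriv' N R hx hN).deriv]
      exact deriv_pos' N R hN hR hx
  exact gaussQ_strictAnti'.comp_strictMonoOn hmono
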